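/- Let Φ : ℝ^{k−1} → ℝ ∪ {+∞} be defined on the open convex set K = {x ∈ ℝ^{k−1} : a < x₁ < x₂ < ... < x_{k−1} < b} (with x₀ = a, x_k = b fixed) by Φ(x) = τ·(1/k)·Σᵢ c((xᵢ − yᵢ)/τ) + (1/k)·Σᵢ h_X(k(x_{i+1} − xᵢ)) + (1/k)·Σᵢ v(xᵢ), where c is strictly convex and continuous, h_X is strictly convex, decreasing, with h_X(s) → ∞ as s → 0+, v is convex and continuous, y is a fixed point of the closure of K, and τ > 0. Then Φ attains a unique minimizer on the closure of K, and this minimizer lies in the open set K (i.e., all coordinates are strictly increasing). -/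

import Mathlib

open scoped BigOperators

/-- The discrete one-step JKO functional `Φ(x) = τ·(1/k)·Σ c((xᵢ-yᵢ)/τ)
+ (1/k)·Σ h_X(k(x_{i+1}-xᵢ)) + (1/k)·Σ v(xᵢ)`, with `EReal` values since
`h_X` takes the value `+∞` at nonpositive arguments. -/
noncomputable def discPhi (k : ℕ) (τ : ℝ) (c v : ℝ → ℝ) (hX : ℝ → EReal)
    (y x : Fin (k + 1) → ℝ) : EReal :=
  ((τ * (1 / (k : ℝ)) * ∑ i, c ((x i - y i) / τ)
      + (1 / (k : ℝ)) * ∑ i, v (x i) : ℝ) : EReal)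
    + (((1 : ℝ) / (k : ℝ) : ℝ) : EReal)
        * ∑ i : Fin k, hX ((k : ℝ) * (x i.succ - x i.castSucc))

namespace JKOAux

open Filter Set Topology

/-- Coercion of a real finite sum to `EReal`. -/
lemma coe_finset_sum {ι : Type*} (s : Finset ι) (g : ι → ℝ) :
    ((∑ i ∈ s, g i : ℝ) : EReal) = ∑ i ∈ s, (g i : EReal) :=
  map_sum (⟨⟨Real.toEReal, EReal.coe_zero⟩, EReal.coe_add⟩ : ℝ →+ EReal) g s

/-- A finite sum of `EReal`s none of which is `⊥` is not `⊥`. -/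
lemma sum_ne_bot {ι : Type*} (s : Finset ι) (g : ι → EReal)
    (h : ∀ i, g i ≠ ⊥) : (∑ i ∈ s, g i) ≠ ⊥ := by
  classical
  induction s using Finset.induction_on with
  | empty => simp
  | @insert a s ha ih =>
    rw [Finset.sum_insert ha, Ne, EReal.add_eq_bot_iff]
    push_neg
    exact ⟨h a, ih⟩

/-- A finite sum of lower semicontinuous `EReal`-valued functions, none of which takes the
value `⊥`, is lower semicontinuous. -/
lemma lsc_sum {α : Type*} [TopologicalSpace α] {ι : Type*} (s : Finset ι)
    (g : ι → α → EReal) (hg : ∀ i, LowerSemicontinuous (g i))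
    (hb : ∀ i x, g i x ≠ ⊥) :
    LowerSemicontinuous (fun x => ∑ i ∈ s, g i x) := by
  classical
  induction s using Finset.induction_on with
  | empty => simpa using lowerSemicontinuous_const
  | @insert a s ha ih =>
    have := (hg a).add' ih
      (fun x => EReal.continuousAt_add (Or.inr (sum_ne_bot s (fun i => g i x) (fun i => hb i x)))
        (Or.inl (hb a x)))
    simpa only [Finset.sum_insert ha] using this

/-- Multiplying a lower semicontinuous `EReal`-valued function by a positive real constant
keeps it lower semicontinuous. -/
lemma lsc_const_mul {α : Type*} [TopologicalSpace α] {f : α → EReal}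
    (hf : LowerSemicontinuous f) (r : ℝ) (hr : 0 < r) :
    LowerSemicontinuous fun x => (r : EReal) * f x := by
  have hr0 : (0 : EReal) < (r : EReal) := by exact_mod_cast hr
  have hrt : (r : EReal) ≠ ⊤ := EReal.coe_ne_top r
  intro x z hz
  have h1 : z / (r : EReal) < f x := by
    rw [gt_iff_lt, lt_iff_not_ge] at hz; rw [lt_iff_not_ge]
    intro hle
    refine hz ?_
    show (r : EReal) * f x ≤ z
    rw [mul_comm]
    exact (EReal.le_div_iff_mul_le hr0 hrt).1 hle
  filter_upwards [hf x _ h1] with w hw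
  rw [gt_iff_lt, lt_iff_not_ge] at hw ⊢
  intro hle
  exact hw ((EReal.le_div_iff_mul_le hr0 hrt).2 (by rwa [mul_comm] at hle))

/-- Existence of a minimizer of a lower semicontinuous `EReal`-valued function on a
nonempty compact closed set. -/
lemma lsc_exists_min {α : Type*} [TopologicalSpace α] {f : α → EReal} {s : Set α}
    (hf : LowerSemicontinuous f) (hs : IsCompact s) (hscl : IsClosed s) (hne : s.Nonempty) :
    ∃ x ∈ s, ∀ z ∈ s, f x ≤ f z := by
  set m : EReal := sInf (f '' s) with hm
  by_cases hmt : m = ⊤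
  · obtain ⟨x, hx⟩ := hne
    refine ⟨x, hx, fun z hz => ?_⟩
    have h1 : m ≤ f z := sInf_le ⟨z, hz, rfl⟩
    rw [hmt, top_le_iff] at h1
    rw [h1]
    exact le_top
  · obtain ⟨t, t_anti, t_mem, t_tendsto⟩ :=
      exists_seq_strictAnti_tendsto' (lt_top_iff_ne_top.2 hmt)
    set K : ℕ → Set α := fun n => s ∩ f ⁻¹' Iic (t n) with hK
    have hKne : ∀ n, (K n).Nonempty := by
      intro n
      have h1 : m < t n := (t_mem n).1
      rw [hm, sInf_lt_iff] at h1
      obtain ⟨e, ⟨x, hx, rfl⟩, he⟩ := h1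
      exact ⟨x, hx, he.le⟩
    have hKcl : ∀ n, IsClosed (K n) := fun n => hscl.inter (hf.isClosed_preimage (t n))
    have hKc : IsCompact (K 0) := hs.inter_right (hf.isClosed_preimage _)
    have hKd : ∀ n, K (n + 1) ⊆ K n := fun n =>
      inter_subset_inter_right _
        (preimage_mono (Iic_subset_Iic.2 (t_anti (Nat.lt_succ_self n)).le))
    obtain ⟨x, hx⟩ :=
      IsCompact.nonempty_iInter_of_sequence_nonempty_isCompact_isClosed K hKd hKne hKc hKcl
    simp only [mem_iInter] at hx
    have hxs : x ∈ s := (hx 0).1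
    refine ⟨x, hxs, fun z hz => ?_⟩
    have hfx : f x ≤ m :=
      ge_of_tendsto t_tendsto (Eventually.of_forall fun n => (hx n).2)
    exact hfx.trans (sInf_le ⟨z, hz, rfl⟩)

section hXprops

variable (hX : ℝ → EReal)
    (hX_fin : ∀ s : ℝ, 0 < s → hX s ≠ ⊤ ∧ hX s ≠ ⊥)
    (hX_inf : ∀ s : ℝ, s ≤ 0 → hX s = ⊤)
    (hX_sconv : ∀ s t : ℝ, 0 < s → 0 < t → s ≠ t →
      (2 : EReal) * hX ((s + t) / 2) < hX s + hX t)
    (hX_anti : AntitoneOn hX (Set.Ioi 0))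
    (hX_blow : Filter.Tendsto hX (nhdsWithin 0 (Set.Ioi 0)) (nhds ⊤))

include hX_fin in
lemma hX_coe : ∀ s : ℝ, 0 < s → hX s = (((hX s).toReal : ℝ) : EReal) := fun s hs =>
  (EReal.coe_toReal (hX_fin s hs).1 (hX_fin s hs).2).symm

include hX_fin hX_sconv in
/-- Real midpoint convexity of `toReal ∘ hX` on positive reals. -/
lemma hX_mid : ∀ u v : ℝ, 0 < u → 0 < v →
    2 * (hX ((u + v) / 2)).toReal ≤ (hX u).toReal + (hX v).toReal := by
  intro u v hu hv
  rcases eq_or_ne u v with rfl | huv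
  · have h1 : (u + u) / 2 = u := by ring
    rw [h1]; linarith
  · have h := hX_sconv u v hu hv huv
    have hm : 0 < (u + v) / 2 := by linarith
    rw [hX_coe hX hX_fin u hu, hX_coe hX hX_fin v hv, hX_coe hX hX_fin _ hm] at h
    have h2 : (((2 : ℝ) : EReal)) * (((hX ((u + v) / 2)).toReal : ℝ) : EReal)
        < (((hX u).toReal : ℝ) : EReal) + (((hX v).toReal : ℝ) : EReal) := by
      convert h using 2 <;> norm_num <;> norm_cast
    rw [← EReal.coe_mul, ← EReal.coe_add] at h2
    exact_mod_cast h2.le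

include hX_fin hX_anti in
lemma hX_real_anti : ∀ u v : ℝ, 0 < u → u ≤ v → (hX v).toReal ≤ (hX u).toReal := by
  intro u v hu huv
  have hv : 0 < v := lt_of_lt_of_le hu huv
  exact EReal.toReal_le_toReal (hX_anti (mem_Ioi.2 hu) (mem_Ioi.2 hv) huv)
    (hX_fin v hv).2 (hX_fin u hu).1

include hX_fin hX_sconv hX_anti in
/-- One can approach the value of `toReal ∘ hX` at `s` from the left. -/
lemma hX_approx : ∀ s : ℝ, 0 < s → ∀ ε : ℝ, 0 < ε →
    ∃ u : ℝ, 0 < u ∧ u < s ∧ (hX u).toReal < (hX s).toReal + ε := by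
  intro s hs ε hε
  set f : ℝ → ℝ := fun r => (hX r).toReal with hfdef
  set u : ℕ → ℝ := fun n => s - s / 2 * (1 / 2) ^ n with hu
  have hupos : ∀ n, 0 < u n := by
    intro n
    have h1 : (1 / 2 : ℝ) ^ n ≤ 1 := pow_le_one₀ (by norm_num) (by norm_num)
    have h2 : s / 2 * (1 / 2) ^ n ≤ s / 2 * 1 :=
      mul_le_mul_of_nonneg_left h1 (by linarith)
    simp only [hu]; nlinarith
  have hult : ∀ n, u n < s := by
    intro n
    have h1 : (0 : ℝ) < s / 2 * (1 / 2) ^ n := by positivity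
    simp only [hu]; linarith
  have hbound : ∀ n, f (u n) - f s ≤ (f (u 0) - f s) * (1 / 2) ^ n := by
    intro n
    induction n with
    | zero => simp
    | succ n ih =>
      have hstep : 2 * f ((u n + s) / 2) ≤ f (u n) + f s :=
        hX_mid hX hX_fin hX_sconv (u n) s (hupos n) hs
      have hmid : u (n + 1) = (u n + s) / 2 := by simp only [hu]; ring
      have h0 : 0 ≤ f (u 0) - f s := by
        have := hX_real_anti hX hX_fin hX_anti (u 0) s (hupos 0) (hult 0).le
        simp only [hfdef] at this ⊢; linarith
      rw [hmid]
      have h1 : f ((u n + s) / 2) - f s ≤ (f (u n) - f s) / 2 := by linarith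
      calc f ((u n + s) / 2) - f s ≤ (f (u n) - f s) / 2 := h1
        _ ≤ (f (u 0) - f s) * (1 / 2) ^ n / 2 := by linarith
        _ = (f (u 0) - f s) * (1 / 2) ^ (n + 1) := by ring
  set C : ℝ := f (u 0) - f s with hC
  have hC0 : 0 ≤ C := by
    have := hX_real_anti hX hX_fin hX_anti (u 0) s (hupos 0) (hult 0).le
    simp only [hC, hfdef] at this ⊢; linarith
  obtain ⟨n, hn⟩ := exists_pow_lt_of_lt_one
    (show (0 : ℝ) < ε / (C + 1) by positivity) (show (1 / 2 : ℝ) < 1 by norm_num)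
  refine ⟨u n, hupos n, hult n, ?_⟩
  have h1 : C * (1 / 2) ^ n ≤ (C + 1) * (1 / 2) ^ n :=
    mul_le_mul_of_nonneg_right (by linarith) (by positivity)
  have h2 : (C + 1) * (1 / 2) ^ n < (C + 1) * (ε / (C + 1)) :=
    mul_lt_mul_of_pos_left hn (by linarith)
  have h3 : (C + 1) * (ε / (C + 1)) = ε := by field_simp
  have h4 := hbound n
  have h5 : f (u n) < f s + ε := by linarith
  exact h5

include hX_fin hX_inf hX_sconv hX_anti hX_blow in
lemma hX_lsc : LowerSemicontinuous hX := by
  intro s z hz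
  rcases lt_trichotomy s 0 with hs | hs | hs
  · have htop : z < (⊤ : EReal) := by
      rw [hX_inf s hs.le] at hz; exact hz
    filter_upwards [Iio_mem_nhds hs] with t ht
    rw [hX_inf t (le_of_lt ht)]
    exact htop
  · subst hs
    have htop : z < (⊤ : EReal) := by
      rw [hX_inf 0 le_rfl] at hz; exact hz
    have h1 : ∀ᶠ t in nhdsWithin (0 : ℝ) (Iic 0), z < hX t := by
      filter_upwards [self_mem_nhdsWithin] with t ht
      rw [hX_inf t ht]; exact htop
    have h2 : ∀ᶠ t in nhdsWithin (0 : ℝ) (Ioi 0), z < hX t :=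
      hX_blow.eventually_const_lt htop
    have hsup := nhdsLE_sup_nhdsGT (0 : ℝ)
    rw [show (𝓝 (0:ℝ)) = nhdsWithin (0:ℝ) (Iic 0) ⊔ nhdsWithin (0:ℝ) (Ioi 0) from hsup.symm]
    exact eventually_sup.2 ⟨h1, h2⟩
  · rw [hX_coe hX hX_fin s hs] at hz
    obtain ⟨ε, hε, hzε⟩ : ∃ ε : ℝ, 0 < ε ∧ z < (((hX s).toReal - ε : ℝ) : EReal) := by
      induction z with
      | bot => exact ⟨1, one_pos, EReal.bot_lt_coe _⟩
      | coe r =>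
        have hr : r < (hX s).toReal := by exact_mod_cast hz
        exact ⟨((hX s).toReal - r) / 2, by linarith, by
          rw [EReal.coe_lt_coe_iff]; linarith⟩
      | top => exact absurd hz (not_lt.2 le_top)
    obtain ⟨u, hu0, hus, hfu⟩ := hX_approx hX hX_fin hX_sconv hX_anti s hs ε hε
    have hI : Ioo u (2 * s - u) ∈ 𝓝 s := Ioo_mem_nhds hus (by linarith)
    filter_upwards [hI] with t ht
    rcases le_or_gt t s with hts | hts
    · have ht0 : 0 < t := lt_trans hu0 ht.1
      have hanti : hX s ≤ hX t := hX_anti (mem_Ioi.2 ht0) (mem_Ioi.2 hs) hts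
      calc z < (((hX s).toReal - ε : ℝ) : EReal) := hzε
        _ ≤ (((hX s).toReal : ℝ) : EReal) := by
            exact_mod_cast (by linarith : (hX s).toReal - ε ≤ (hX s).toReal)
        _ = hX s := (hX_coe hX hX_fin s hs).symm
        _ ≤ hX t := hanti
    · have ht0 : 0 < t := lt_trans hs hts
      have h2su : 0 < 2 * s - u := by linarith
      have hmid := hX_mid hX hX_fin hX_sconv u (2 * s - u) hu0 h2su
      have harg : (u + (2 * s - u)) / 2 = s := by ring
      rw [harg] at hmid
      have hmono : (hX (2 * s - u)).toReal ≤ (hX t).toReal :=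
        hX_real_anti hX hX_fin hX_anti t (2 * s - u) ht0 ht.2.le
      have hft : (hX s).toReal - ε ≤ (hX t).toReal := by linarith
      calc z < (((hX s).toReal - ε : ℝ) : EReal) := hzε
        _ ≤ (((hX t).toReal : ℝ) : EReal) := by exact_mod_cast hft
        _ = hX t := (hX_coe hX hX_fin t ht0).symm

end hXprops

end JKOAux

/-- the discrete JKO minimization problem has a unique minimizer
over the closed simplex of monotone vectors with pinned endpoints, and the
minimizer has strictly increasing coordinates. -/
theorem discrete_JKO_wellposed (k : ℕ) (hk : 0 < k) (a b τ : ℝ)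
    (hab : a < b) (hτ : 0 < τ)
    (c v : ℝ → ℝ) (hX : ℝ → EReal)
    (hc_conv : StrictConvexOn ℝ Set.univ c) (hc_cont : Continuous c)
    (hv_conv : ConvexOn ℝ Set.univ v) (hv_cont : Continuous v)
    (hX_fin : ∀ s : ℝ, 0 < s → hX s ≠ ⊤ ∧ hX s ≠ ⊥)
    (hX_inf : ∀ s : ℝ, s ≤ 0 → hX s = ⊤)
    (hX_sconv : ∀ s t : ℝ, 0 < s → 0 < t → s ≠ t →
      (2 : EReal) * hX ((s + t) / 2) < hX s + hX t)
    (hX_anti : AntitoneOn hX (Set.Ioi 0))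
    (hX_blow : Filter.Tendsto hX (nhdsWithin 0 (Set.Ioi 0)) (nhds ⊤))
    (y : Fin (k + 1) → ℝ)
    (hy : y 0 = a ∧ y (Fin.last k) = b ∧ StrictMono y) :
    ∃! x : Fin (k + 1) → ℝ,
      (x 0 = a ∧ x (Fin.last k) = b ∧ Monotone x) ∧
      (∀ w : Fin (k + 1) → ℝ, w 0 = a → w (Fin.last k) = b → Monotone w →
        discPhi k τ c v hX y x ≤ discPhi k τ c v hX y w) ∧
      StrictMono x := by
  classical
  obtain ⟨hy0, hyl, hymono⟩ := hy
  have hk' : (0 : ℝ) < (k : ℝ) := by exact_mod_cast hk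
  have hk1 : (0 : ℝ) < 1 / (k : ℝ) := by positivity
  set S : Set (Fin (k + 1) → ℝ) :=
    {x | x 0 = a ∧ x (Fin.last k) = b ∧ Monotone x} with hS
  set Φ : (Fin (k + 1) → ℝ) → EReal := discPhi k τ c v hX y with hΦ
  set F : (Fin (k + 1) → ℝ) → ℝ := fun x =>
    τ * (1 / (k : ℝ)) * ∑ i, c ((x i - y i) / τ) + (1 / (k : ℝ)) * ∑ i, v (x i)
      + (1 / (k : ℝ)) * ∑ i : Fin k, (hX ((k : ℝ) * (x i.succ - x i.castSucc))).toReal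
      with hF
  have hXnb : ∀ s : ℝ, hX s ≠ ⊥ := by
    intro s
    rcases le_or_gt s 0 with h | h
    · rw [hX_inf s h]; exact bot_lt_top.ne'
    · exact (hX_fin s h).2
  have hgap : ∀ x : Fin (k + 1) → ℝ, StrictMono x → ∀ i : Fin k,
      0 < (k : ℝ) * (x i.succ - x i.castSucc) := by
    intro x hx i
    have h1 := hx (Fin.castSucc_lt_succ (i := i))
    nlinarith
  have hPhiF : ∀ x : Fin (k + 1) → ℝ, StrictMono x → Φ x = ((F x : ℝ) : EReal) := by
    intro x hx
    have hsum : ∑ i : Fin k, hX ((k : ℝ) * (x i.succ - x i.castSucc))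
        = ((∑ i : Fin k, (hX ((k : ℝ) * (x i.succ - x i.castSucc))).toReal : ℝ) : EReal) := by
      rw [JKOAux.coe_finset_sum]
      exact Finset.sum_congr rfl fun i _ => JKOAux.hX_coe hX hX_fin _ (hgap x hx i)
    show ((τ * (1 / (k : ℝ)) * ∑ i, c ((x i - y i) / τ)
        + (1 / (k : ℝ)) * ∑ i, v (x i) : ℝ) : EReal)
      + (((1 : ℝ) / (k : ℝ) : ℝ) : EReal)
          * ∑ i : Fin k, hX ((k : ℝ) * (x i.succ - x i.castSucc))
      = ((F x : ℝ) : EReal)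
    rw [hsum, ← EReal.coe_mul, ← EReal.coe_add]
  have hG : LowerSemicontinuous fun x : Fin (k + 1) → ℝ =>
      ∑ i : Fin k, hX ((k : ℝ) * (x i.succ - x i.castSucc)) := by
    apply JKOAux.lsc_sum
    · intro i
      exact (JKOAux.hX_lsc hX hX_fin hX_inf hX_sconv hX_anti hX_blow).comp
        (continuous_const.mul ((continuous_apply _).sub (continuous_apply _)))
    · intro i x; exact hXnb _
  have hreal : Continuous fun x : Fin (k + 1) → ℝ =>
      τ * (1 / (k : ℝ)) * ∑ i, c ((x i - y i) / τ) + (1 / (k : ℝ)) * ∑ i, v (x i) := by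
    apply Continuous.add
    · exact continuous_const.mul (continuous_finset_sum _ fun i _ =>
        hc_cont.comp (((continuous_apply i).sub continuous_const : Continuous fun x : Fin (k + 1) → ℝ => x i - y i).div_const τ))
    · exact continuous_const.mul (continuous_finset_sum _ fun i _ =>
        hv_cont.comp (continuous_apply i))
  have hΦlsc : LowerSemicontinuous Φ := by
    have h1 : LowerSemicontinuous fun x : Fin (k + 1) → ℝ =>
        ((τ * (1 / (k : ℝ)) * ∑ i, c ((x i - y i) / τ)
          + (1 / (k : ℝ)) * ∑ i, v (x i) : ℝ) : EReal) :=
      (continuous_coe_real_ereal.comp hreal).lowerSemicontinuous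
    have h2 := JKOAux.lsc_const_mul hG (1 / (k : ℝ)) hk1
    have h3 := h1.add' h2 (fun x => EReal.continuousAt_add (Or.inl (EReal.coe_ne_top _))
      (Or.inl (EReal.coe_ne_bot _)))
    exact h3
  have hSclosed : IsClosed S := by
    have h1 : IsClosed {x : Fin (k + 1) → ℝ | x 0 = a} :=
      isClosed_eq (continuous_apply 0) continuous_const
    have h2 : IsClosed {x : Fin (k + 1) → ℝ | x (Fin.last k) = b} :=
      isClosed_eq (continuous_apply _) continuous_const
    have h3 : IsClosed {x : Fin (k + 1) → ℝ | Monotone x} := by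
      have he : {x : Fin (k + 1) → ℝ | Monotone x}
          = ⋂ (i : Fin (k + 1)) (j : Fin (k + 1)) (_ : i ≤ j), {x | x i ≤ x j} := by
        ext x
        simp only [Set.mem_iInter, Set.mem_setOf_eq]
        exact ⟨fun h i j hij => h hij, fun h i j hij => h i j hij⟩
      rw [he]
      exact isClosed_iInter fun i => isClosed_iInter fun j => isClosed_iInter fun _ =>
        isClosed_le (continuous_apply i) (continuous_apply j)
    exact h1.inter (h2.inter h3)
  have hSsub : S ⊆ Set.pi Set.univ fun _ : Fin (k + 1) => Set.Icc a b := by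
    rintro x ⟨h0, hl, hmono⟩ i _
    exact ⟨by rw [← h0]; exact hmono (Fin.zero_le i),
      by rw [← hl]; exact hmono (Fin.le_last i)⟩
  have hScompact : IsCompact S :=
    (isCompact_univ_pi fun _ => isCompact_Icc).of_isClosed_subset hSclosed hSsub
  have hyS : y ∈ S := ⟨hy0, hyl, hymono.monotone⟩
  obtain ⟨x, hxS, hxmin⟩ := JKOAux.lsc_exists_min hΦlsc hScompact hSclosed ⟨y, hyS⟩
  have hΦy : Φ y = ((F y : ℝ) : EReal) := hPhiF y hymono
  have hxsm : StrictMono x := by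
    by_contra hxsm
    rw [Fin.strictMono_iff_lt_succ] at hxsm
    push_neg at hxsm
    obtain ⟨i, hi⟩ := hxsm
    have heq : x i.succ = x i.castSucc :=
      le_antisymm hi (hxS.2.2 (Fin.castSucc_lt_succ (i := i)).le)
    have harg : (k : ℝ) * (x i.succ - x i.castSucc) = 0 := by rw [heq]; ring
    have htop : hX ((k : ℝ) * (x i.succ - x i.castSucc)) = ⊤ := by
      rw [harg]; exact hX_inf 0 le_rfl
    have hsumtop : ∑ j : Fin k, hX ((k : ℝ) * (x j.succ - x j.castSucc)) = ⊤ := by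
      rw [← Finset.add_sum_erase _ _ (Finset.mem_univ i), htop,
        EReal.top_add_of_ne_bot (JKOAux.sum_ne_bot _ _ fun j => hXnb _)]
    have hΦxtop : Φ x = ⊤ := by
      show ((τ * (1 / (k : ℝ)) * ∑ i, c ((x i - y i) / τ)
          + (1 / (k : ℝ)) * ∑ i, v (x i) : ℝ) : EReal)
        + (((1 : ℝ) / (k : ℝ) : ℝ) : EReal)
            * ∑ i : Fin k, hX ((k : ℝ) * (x i.succ - x i.castSucc)) = ⊤
      rw [hsumtop, EReal.mul_top_of_pos (by exact_mod_cast hk1), EReal.coe_add_top]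
    have hle := hxmin y hyS
    rw [hΦxtop, hΦy, top_le_iff] at hle
    exact EReal.coe_ne_top _ hle
  have hmidF : ∀ w z : Fin (k + 1) → ℝ, StrictMono w → StrictMono z →
      w ≠ z → F (fun i => (w i + z i) / 2) < (F w + F z) / 2 := by
    intro w z hwsm hzsm hne
    obtain ⟨i₀, hi₀⟩ := Function.ne_iff.1 hne
    have hcle : ∀ i ∈ (Finset.univ : Finset (Fin (k + 1))),
        c (((w i + z i) / 2 - y i) / τ)
          ≤ (c ((w i - y i) / τ) + c ((z i - y i) / τ)) / 2 := by
      intro i _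
      have h := hc_conv.convexOn.2 (Set.mem_univ ((w i - y i) / τ))
        (Set.mem_univ ((z i - y i) / τ))
        (by norm_num : (0:ℝ) ≤ 1/2) (by norm_num : (0:ℝ) ≤ 1/2) (by norm_num)
      simp only [smul_eq_mul] at h
      have harg : ((w i + z i) / 2 - y i) / τ
          = 1/2 * ((w i - y i) / τ) + 1/2 * ((z i - y i) / τ) := by ring
      rw [harg]; linarith
    have hclt : c (((w i₀ + z i₀) / 2 - y i₀) / τ)
        < (c ((w i₀ - y i₀) / τ) + c ((z i₀ - y i₀) / τ)) / 2 := by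
      have hpq : (w i₀ - y i₀) / τ ≠ (z i₀ - y i₀) / τ := by
        intro h
        apply hi₀
        have h2 := congrArg (· * τ) h
        simp only [div_mul_cancel₀ _ hτ.ne'] at h2
        linarith
      have h := hc_conv.2 (Set.mem_univ _) (Set.mem_univ _) hpq
        (by norm_num : (0:ℝ) < 1/2) (by norm_num : (0:ℝ) < 1/2) (by norm_num)
      simp only [smul_eq_mul] at h
      have harg : ((w i₀ + z i₀) / 2 - y i₀) / τ
          = 1/2 * ((w i₀ - y i₀) / τ) + 1/2 * ((z i₀ - y i₀) / τ) := by ring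
      rw [harg]; linarith
    have hC : ∑ i, c (((w i + z i) / 2 - y i) / τ)
        < (∑ i, c ((w i - y i) / τ) + ∑ i, c ((z i - y i) / τ)) / 2 := by
      have h1 := Finset.sum_lt_sum hcle ⟨i₀, Finset.mem_univ i₀, hclt⟩
      have h2 : ∑ i, (c ((w i - y i) / τ) + c ((z i - y i) / τ)) / 2
          = (∑ i, c ((w i - y i) / τ) + ∑ i, c ((z i - y i) / τ)) / 2 := by
        rw [← Finset.sum_div, Finset.sum_add_distrib]
      linarith
    have hV : ∑ i, v ((w i + z i) / 2) ≤ (∑ i, v (w i) + ∑ i, v (z i)) / 2 := by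
      have h1 : ∀ i ∈ (Finset.univ : Finset (Fin (k + 1))),
          v ((w i + z i) / 2) ≤ (v (w i) + v (z i)) / 2 := by
        intro i _
        have h := hv_conv.2 (Set.mem_univ (w i)) (Set.mem_univ (z i))
          (by norm_num : (0:ℝ) ≤ 1/2) (by norm_num : (0:ℝ) ≤ 1/2) (by norm_num)
        simp only [smul_eq_mul] at h
        have harg : (w i + z i) / 2 = 1/2 * w i + 1/2 * z i := by ring
        rw [harg]; linarith
      have h2 : ∑ i, (v (w i) + v (z i)) / 2
          = (∑ i, v (w i) + ∑ i, v (z i)) / 2 := by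
        rw [← Finset.sum_div, Finset.sum_add_distrib]
      calc ∑ i, v ((w i + z i) / 2) ≤ ∑ i, (v (w i) + v (z i)) / 2 :=
            Finset.sum_le_sum h1
        _ = _ := h2
    have hH : ∑ i : Fin k,
        (hX ((k : ℝ) * ((w i.succ + z i.succ) / 2
          - (w i.castSucc + z i.castSucc) / 2))).toReal
        ≤ (∑ i : Fin k, (hX ((k : ℝ) * (w i.succ - w i.castSucc))).toReal
          + ∑ i : Fin k, (hX ((k : ℝ) * (z i.succ - z i.castSucc))).toReal) / 2 := by
      have h1 : ∀ i ∈ (Finset.univ : Finset (Fin k)),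
          (hX ((k : ℝ) * ((w i.succ + z i.succ) / 2
            - (w i.castSucc + z i.castSucc) / 2))).toReal
          ≤ ((hX ((k : ℝ) * (w i.succ - w i.castSucc))).toReal
            + (hX ((k : ℝ) * (z i.succ - z i.castSucc))).toReal) / 2 := by
        intro i _
        have hg := hgap w hwsm i
        have hg' := hgap z hzsm i
        have hm := JKOAux.hX_mid hX hX_fin hX_sconv _ _ hg hg'
        have harg : ((k : ℝ) * (w i.succ - w i.castSucc)
            + (k : ℝ) * (z i.succ - z i.castSucc)) / 2
            = (k : ℝ) * ((w i.succ + z i.succ) / 2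
              - (w i.castSucc + z i.castSucc) / 2) := by ring
        rw [harg] at hm
        linarith
      have h2 : ∑ i : Fin k, ((hX ((k : ℝ) * (w i.succ - w i.castSucc))).toReal
            + (hX ((k : ℝ) * (z i.succ - z i.castSucc))).toReal) / 2
          = (∑ i : Fin k, (hX ((k : ℝ) * (w i.succ - w i.castSucc))).toReal
            + ∑ i : Fin k, (hX ((k : ℝ) * (z i.succ - z i.castSucc))).toReal) / 2 := by
        rw [← Finset.sum_div, Finset.sum_add_distrib]
      calc _ ≤ _ := Finset.sum_le_sum h1
        _ = _ := h2
    have hτk : 0 < τ * (1 / (k : ℝ)) := by positivity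
    have e1 := mul_lt_mul_of_pos_left hC hτk
    have e2 := mul_le_mul_of_nonneg_left hV hk1.le
    have e3 := mul_le_mul_of_nonneg_left hH hk1.le
    simp only [hF]
    linarith
  have key : ∀ w z : Fin (k + 1) → ℝ, w ∈ S → z ∈ S → StrictMono w → StrictMono z →
      (∀ u ∈ S, Φ w ≤ Φ u) → (∀ u ∈ S, Φ z ≤ Φ u) → w = z := by
    intro w z hwS hzS hwsm hzsm hwmin hzmin
    by_contra hne
    have hmS : (fun i => (w i + z i) / 2) ∈ S := by
      refine ⟨?_, ?_, ?_⟩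
      · show (w 0 + z 0) / 2 = a
        rw [hwS.1, hzS.1]; ring
      · show (w (Fin.last k) + z (Fin.last k)) / 2 = b
        rw [hwS.2.1, hzS.2.1]; ring
      · intro i j hij
        have h1 := hwS.2.2 hij
        have h2 := hzS.2.2 hij
        show (w i + z i) / 2 ≤ (w j + z j) / 2
        linarith
    have hmsm : StrictMono (fun i => (w i + z i) / 2) := by
      intro i j hij
      have h1 := hwsm hij
      have h2 := hzsm hij
      show (w i + z i) / 2 < (w j + z j) / 2
      linarith
    have hFeq : F w = F z := by
      have h1 := hwmin z hzS
      have h2 := hzmin w hwS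
      rw [hPhiF w hwsm, hPhiF z hzsm] at h1 h2
      exact_mod_cast le_antisymm h1 h2
    have hlt := hmidF w z hwsm hzsm hne
    rw [hFeq] at hlt
    have h3 := hzmin _ hmS
    rw [hPhiF z hzsm, hPhiF _ hmsm] at h3
    have h4 : F z ≤ F (fun i => (w i + z i) / 2) := by exact_mod_cast h3
    linarith
  refine ⟨x, ⟨hxS, fun w hw0 hwl hwm => hxmin w ⟨hw0, hwl, hwm⟩, hxsm⟩, ?_⟩
  rintro w ⟨hwS', hwmin, hwsm⟩
  exact key w x hwS' hxS hwsm hxsm (fun u hu => hwmin u hu.1 hu.2.1 hu.2.2) hxmin
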